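/- Let L ≥ 2. Consider a greedy floor-assignment process: given a pairing {((X_r,Y_r),(X'_r,Y'_r))}_{r=1}^{L²/2} of the L² points of [L]², process pairs in order r = 1, 2, ..., assigning pair r the smallest floor index Z_r ∈ [4L] such that no previously-assigned pair on floor Z_r shares an x-coordinate with {X_r, X'_r} or a y-coordinate with {Y_r, Y'_r}. Then such a floor index always exists, i.e., the greedy algorithm never fails, and moreover for each floor Z ∈ [4L], any two distinct pairs assigned to floor Z have disjoint x-coordinate sets and disjoint y-coordinate sets. -/

import Mathlib

/-- `a, b : Fin k → V` form a pairing of the set `S` into `k` pairs. -/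
def IsPairing {V : Type*} (S : Finset V) {k : ℕ} (a b : Fin k → V) : Prop :=
  Function.Injective (Sum.elim a b : Fin k ⊕ Fin k → V) ∧
  ∀ v, v ∈ S ↔ ((∃ r, a r = v) ∨ ∃ r, b r = v)

/-- Pair `r` is compatible with floor `z`: no earlier pair assigned to floor `z`
shares a column (x-coordinate) or a row (y-coordinate) with pair `r`. -/
def Compat {L k : ℕ} (a b : Fin k → Fin L × Fin L) (Z : Fin k → Fin (4 * L))
    (r : Fin k) (z : Fin (4 * L)) : Prop :=
  ∀ q : Fin k, q < r → Z q = z →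
    (({(a r).1, (b r).1} : Set (Fin L)) ∩ {(a q).1, (b q).1} = ∅ ∧
     ({(a r).2, (b r).2} : Set (Fin L)) ∩ {(a q).2, (b q).2} = ∅)


def Disj {L k : ℕ} (a b : Fin k → Fin L × Fin L) (r q : Fin k) : Prop :=
  (({(a r).1, (b r).1} : Set (Fin L)) ∩ {(a q).1, (b q).1} = ∅ ∧
   ({(a r).2, (b r).2} : Set (Fin L)) ∩ {(a q).2, (b q).2} = ∅)

open Classical in
/-- at most L pairs touch column x -/
theorem col_card {L k : ℕ} {a b : Fin k → Fin L × Fin L}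
    (hinj : Function.Injective (Sum.elim a b : Fin k ⊕ Fin k → Fin L × Fin L)) (x : Fin L) :
    (Finset.univ.filter (fun q => (a q).1 = x ∨ (b q).1 = x)).card ≤ L := by
  have := Finset.card_le_card_of_injOn (f := fun q : Fin k => if (a q).1 = x then (a q).2 else (b q).2)
    (s := Finset.univ.filter (fun q => (a q).1 = x ∨ (b q).1 = x)) (t := (Finset.univ : Finset (Fin L)))
    (fun _ _ => Finset.mem_univ _) ?_
  · simpa using this
  · intro q1 h1 q2 h2 heq
    simp only [Finset.coe_filter, Set.mem_setOf_eq, Finset.mem_univ, true_and] at h1 h2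
    set p : Fin k → Fin L × Fin L := fun q => if (a q).1 = x then a q else b q with hp
    have hfst : ∀ q, ((a q).1 = x ∨ (b q).1 = x) → (p q).1 = x := by
      intro q hq
      by_cases h : (a q).1 = x
      · simp [hp, h]
      · simp [hp, h]; tauto
    have hsnd : ∀ q, (p q).2 = if (a q).1 = x then (a q).2 else (b q).2 := by
      intro q; by_cases h : (a q).1 = x <;> simp [hp, h]
    have hpe : p q1 = p q2 := by
      apply Prod.ext
      · rw [hfst q1 h1, hfst q2 h2]
      · rw [hsnd, hsnd]; exact heq
    have hcase : ∀ q, p q = a q ∨ p q = b q := by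
      intro q; by_cases h : (a q).1 = x <;> simp [hp, h]
    rcases hcase q1 with e1 | e1 <;> rcases hcase q2 with e2 | e2 <;>
      rw [e1, e2] at hpe
    · exact Sum.inl_injective (hinj (show Sum.elim a b (.inl q1) = Sum.elim a b (.inl q2) from hpe))
    · exact absurd (hinj (show Sum.elim a b (.inl q1) = Sum.elim a b (.inr q2) from hpe)) (by simp)
    · exact absurd (hinj (show Sum.elim a b (.inr q1) = Sum.elim a b (.inl q2) from hpe)) (by simp)
    · exact Sum.inr_injective (hinj (show Sum.elim a b (.inr q1) = Sum.elim a b (.inr q2) from hpe))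

open Classical in
theorem row_card {L k : ℕ} {a b : Fin k → Fin L × Fin L}
    (hinj : Function.Injective (Sum.elim a b : Fin k ⊕ Fin k → Fin L × Fin L)) (y : Fin L) :
    (Finset.univ.filter (fun q => (a q).2 = y ∨ (b q).2 = y)).card ≤ L := by
  have key := col_card (a := fun q => ((a q).2, (a q).1)) (b := fun q => ((b q).2, (b q).1))
    (hinj := ?_) y
  · simpa using key
  · intro u v huv
    apply hinj
    rcases u with u | u <;> rcases v with v | v <;>
      simp only [Sum.elim_inl, Sum.elim_inr, Prod.mk.injEq] at huv ⊢ <;>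
      exact Prod.ext huv.2 huv.1


def Pred {L k : ℕ} (a b : Fin k → Fin L × Fin L) (n : ℕ) (f : ℕ → ℕ) (z : ℕ) : Prop :=
  z = 4*L ∨ ∀ m, m < n → ∀ (hn : n < k) (hmk : m < k), f m = z → Disj a b ⟨n, hn⟩ ⟨m, hmk⟩

open Classical in
noncomputable def step {L k : ℕ} (a b : Fin k → Fin L × Fin L) (n : ℕ) (f : ℕ → ℕ) : ℕ :=
  Nat.find (p := Pred a b n f) ⟨4*L, Or.inl rfl⟩

theorem Pred_congr {L k : ℕ} (a b : Fin k → Fin L × Fin L) {n : ℕ} {f g : ℕ → ℕ}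
    (h : ∀ m, m < n → f m = g m) (z : ℕ) : Pred a b n f z ↔ Pred a b n g z := by
  unfold Pred
  constructor <;> rintro (rfl | hp) <;> [exact Or.inl rfl; skip; exact Or.inl rfl; skip] <;>
    refine Or.inr fun m hm hn hmk hz => hp m hm hn hmk ?_ <;> rw [h m hm] at * <;> exact hz

open Classical in
theorem step_congr {L k : ℕ} (a b : Fin k → Fin L × Fin L) {n : ℕ} {f g : ℕ → ℕ}
    (h : ∀ m, m < n → f m = g m) : step a b n f = step a b n g := by
  unfold step
  congr 1
  · funext z; exact propext (Pred_congr a b h z)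

noncomputable def G {L k : ℕ} (a b : Fin k → Fin L × Fin L) : ℕ → ℕ → ℕ
  | 0 => fun _ => 0
  | (n+1) => fun m => if m = n then step a b n (G a b n) else G a b n m

noncomputable def gz {L k : ℕ} (a b : Fin k → Fin L × Fin L) (n : ℕ) : ℕ :=
  step a b n (G a b n)

theorem G_eq {L k : ℕ} (a b : Fin k → Fin L × Fin L) :
    ∀ n m, m < n → G a b n m = gz a b m := by
  intro n
  induction n with
  | zero => omega
  | succ n ih =>
    intro m hm
    by_cases h : m = n
    · subst h
      show (if m = m then step a b m (G a b m) else _) = _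
      rw [if_pos rfl]; rfl
    · show (if m = n then _ else G a b n m) = _
      rw [if_neg h]; exact ih m (by omega)

theorem gz_fix {L k : ℕ} (a b : Fin k → Fin L × Fin L) (n : ℕ) :
    gz a b n = step a b n (gz a b) :=
  step_congr a b (G_eq a b n)

open Classical in
theorem gz_spec {L k : ℕ} (a b : Fin k → Fin L × Fin L) (n : ℕ) :
    Pred a b n (gz a b) (gz a b n) := by
  rw [gz_fix]
  exact (Pred_congr a b (fun m hm => rfl) _).mp (Nat.find_spec (p := Pred a b n (gz a b)) ⟨4*L, Or.inl rfl⟩)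

open Classical in
theorem gz_min {L k : ℕ} (a b : Fin k → Fin L × Fin L) {n z : ℕ} (h : z < gz a b n) :
    ¬ Pred a b n (gz a b) z := by
  rw [gz_fix] at h
  exact Nat.find_min (p := Pred a b n (gz a b)) ⟨4*L, Or.inl rfl⟩ h

open Classical in
theorem gz_le {L k : ℕ} (a b : Fin k → Fin L × Fin L) {n z : ℕ}
    (h : Pred a b n (gz a b) z) : gz a b n ≤ z := by
  rw [gz_fix]
  exact Nat.find_min' (p := Pred a b n (gz a b)) ⟨4*L, Or.inl rfl⟩ h

open Classical in
theorem bad_card {L k : ℕ} {a b : Fin k → Fin L × Fin L} (hL : 2 ≤ L)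
    (hinj : Function.Injective (Sum.elim a b : Fin k ⊕ Fin k → Fin L × Fin L)) (r : Fin k) :
    (Finset.univ.filter (fun q => q < r ∧ ¬ Disj a b r q)).card < 4 * L := by
  set Q1 := Finset.univ.filter (fun q : Fin k => (a q).1 = (a r).1 ∨ (b q).1 = (a r).1) with hQ1
  set Q2 := Finset.univ.filter (fun q : Fin k => (a q).1 = (b r).1 ∨ (b q).1 = (b r).1) with hQ2
  set Q3 := Finset.univ.filter (fun q : Fin k => (a q).2 = (a r).2 ∨ (b q).2 = (a r).2) with hQ3
  set Q4 := Finset.univ.filter (fun q : Fin k => (a q).2 = (b r).2 ∨ (b q).2 = (b r).2) with hQ4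
  have hr1 : r ∈ Q1 := by simp [hQ1]
  have hr2 : r ∈ Q2 := by simp [hQ2]
  have hr3 : r ∈ Q3 := by simp [hQ3]
  have hr4 : r ∈ Q4 := by simp [hQ4]
  have hsub : Finset.univ.filter (fun q => q < r ∧ ¬ Disj a b r q) ⊆
      Q1.erase r ∪ Q2.erase r ∪ Q3.erase r ∪ Q4.erase r := by
    intro q hq
    simp only [Finset.mem_filter, Finset.mem_univ, true_and] at hq
    obtain ⟨hlt, hnd⟩ := hq
    have hne : q ≠ r := ne_of_lt hlt
    have : ¬(({(a r).1, (b r).1} : Set (Fin L)) ∩ {(a q).1, (b q).1} = ∅) ∨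
           ¬(({(a r).2, (b r).2} : Set (Fin L)) ∩ {(a q).2, (b q).2} = ∅) := by
      by_contra h; push_neg at h; exact hnd ⟨h.1, h.2⟩
    have hmem : q ∈ Q1 ∨ q ∈ Q2 ∨ q ∈ Q3 ∨ q ∈ Q4 := by
      rcases this with h | h
      · obtain ⟨x, hx⟩ := Set.nonempty_iff_ne_empty.mpr h
        simp only [Set.mem_inter_iff, Set.mem_insert_iff, Set.mem_singleton_iff] at hx
        obtain ⟨hx1, hx2⟩ := hx
        rcases hx1 with rfl | rfl
        · left; simp only [hQ1, Finset.mem_filter, Finset.mem_univ, true_and]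
          rcases hx2 with h2 | h2; exacts [Or.inl h2.symm, Or.inr h2.symm]
        · right; left; simp only [hQ2, Finset.mem_filter, Finset.mem_univ, true_and]
          rcases hx2 with h2 | h2; exacts [Or.inl h2.symm, Or.inr h2.symm]
      · obtain ⟨y, hy⟩ := Set.nonempty_iff_ne_empty.mpr h
        simp only [Set.mem_inter_iff, Set.mem_insert_iff, Set.mem_singleton_iff] at hy
        obtain ⟨hy1, hy2⟩ := hy
        rcases hy1 with rfl | rfl
        · right; right; left; simp only [hQ3, Finset.mem_filter, Finset.mem_univ, true_and]
          rcases hy2 with h2 | h2; exacts [Or.inl h2.symm, Or.inr h2.symm]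
        · right; right; right; simp only [hQ4, Finset.mem_filter, Finset.mem_univ, true_and]
          rcases hy2 with h2 | h2; exacts [Or.inl h2.symm, Or.inr h2.symm]
    simp only [Finset.mem_union, Finset.mem_erase, hne, ne_eq, not_false_eq_true, true_and]
    tauto
  calc (Finset.univ.filter (fun q => q < r ∧ ¬ Disj a b r q)).card
      ≤ (Q1.erase r ∪ Q2.erase r ∪ Q3.erase r ∪ Q4.erase r).card := Finset.card_le_card hsub
    _ ≤ (Q1.erase r).card + (Q2.erase r).card + (Q3.erase r).card + (Q4.erase r).card := by
        calc _ ≤ (Q1.erase r ∪ Q2.erase r ∪ Q3.erase r).card + (Q4.erase r).card :=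
                Finset.card_union_le _ _
          _ ≤ (Q1.erase r ∪ Q2.erase r).card + (Q3.erase r).card + (Q4.erase r).card := by
                have := Finset.card_union_le (Q1.erase r ∪ Q2.erase r) (Q3.erase r); omega
          _ ≤ _ := by have := Finset.card_union_le (Q1.erase r) (Q2.erase r); omega
    _ < 4 * L := by
        have e1 : (Q1.erase r).card = Q1.card - 1 := Finset.card_erase_of_mem hr1
        have e2 : (Q2.erase r).card = Q2.card - 1 := Finset.card_erase_of_mem hr2
        have e3 : (Q3.erase r).card = Q3.card - 1 := Finset.card_erase_of_mem hr3
        have e4 : (Q4.erase r).card = Q4.card - 1 := Finset.card_erase_of_mem hr4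
        have c1 := col_card hinj (a r).1
        have c2 := col_card hinj (b r).1
        have c3 := row_card hinj (a r).2
        have c4 := row_card hinj (b r).2
        rw [← hQ1] at c1; rw [← hQ2] at c2; rw [← hQ3] at c3; rw [← hQ4] at c4
        have hQ1pos : 1 ≤ Q1.card := Finset.card_pos.mpr ⟨r, hr1⟩
        omega

open Classical in
theorem gz_lt {L k : ℕ} {a b : Fin k → Fin L × Fin L} (hL : 2 ≤ L)
    (hinj : Function.Injective (Sum.elim a b : Fin k ⊕ Fin k → Fin L × Fin L)) (r : Fin k) :
    gz a b r.val < 4 * L := by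
  -- find a free floor
  set Bad := Finset.univ.filter (fun q => q < r ∧ ¬ Disj a b r q) with hBad
  set Blocked := Bad.image (fun q => gz a b q.val) with hBlocked
  have hcard : Blocked.card < 4 * L :=
    lt_of_le_of_lt (Finset.card_image_le) (bad_card hL hinj r)
  have : ∃ z ∈ Finset.range (4 * L), z ∉ Blocked := by
    by_contra h
    push_neg at h
    have hsub : Finset.range (4 * L) ⊆ Blocked := fun z hz => h z hz
    have := Finset.card_le_card hsub
    rw [Finset.card_range] at this
    omega
  obtain ⟨z, hzr, hzb⟩ := this
  rw [Finset.mem_range] at hzr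
  have hzfree : Pred a b r.val (gz a b) z := by
    refine Or.inr fun m hm hn hmk hz => ?_
    have hrr : (⟨r.val, hn⟩ : Fin k) = r := Fin.ext rfl
    rw [hrr]
    by_contra hnd
    have hq : (⟨m, hmk⟩ : Fin k) ∈ Bad := by
      simp only [hBad, Finset.mem_filter, Finset.mem_univ, true_and]
      exact ⟨by rwa [Fin.lt_def], hnd⟩
    exact hzb (Finset.mem_image.mpr ⟨_, hq, hz⟩)
  exact lt_of_le_of_lt (gz_le a b hzfree) hzr

theorem stmt3 (L k : ℕ) (hL : 2 ≤ L) (hk : 2 * k = L ^ 2)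
    (a b : Fin k → Fin L × Fin L)
    (hpair : IsPairing (Finset.univ : Finset (Fin L × Fin L)) a b) :
    ∃ Z : Fin k → Fin (4 * L),
      (∀ r : Fin k,
        Compat a b Z r (Z r) ∧ ∀ z : Fin (4 * L), z < Z r → ¬ Compat a b Z r z) ∧
      (∀ r s : Fin k, r ≠ s → Z r = Z s →
        (({(a r).1, (b r).1} : Set (Fin L)) ∩ {(a s).1, (b s).1} = ∅ ∧
         ({(a r).2, (b r).2} : Set (Fin L)) ∩ {(a s).2, (b s).2} = ∅)) := by
  obtain ⟨hinj, -⟩ := hpair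
  refine ⟨fun r => ⟨gz a b r.val, gz_lt hL hinj r⟩, ?_, ?_⟩
  · intro r
    constructor
    · -- Compat at chosen floor
      intro q hq hZq
      have hspec := gz_spec a b r.val
      rcases hspec with h4 | hall
      · exact absurd h4 (Nat.ne_of_lt (gz_lt hL hinj r))
      · have := hall q.val (by rwa [← Fin.lt_def]) r.2 q.2
          (by simpa using congrArg Fin.val hZq)
        simpa [Fin.eta, Disj] using this
    · -- minimality
      intro z hz hcompat
      have hmin := gz_min a b (n := r.val) (z := z.val) hz
      apply hmin
      refine Or.inr fun m hm hn hmk hzm => ?_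
      have hrr : (⟨r.val, hn⟩ : Fin k) = r := Fin.ext rfl
      rw [hrr]
      have := hcompat ⟨m, hmk⟩ (by rwa [Fin.lt_def]) (Fin.ext hzm)
      exact this
  · intro r s hne hZ
    have hval : gz a b r.val = gz a b s.val := congrArg Fin.val hZ
    rcases lt_or_gt_of_ne hne with hlt | hlt
    · -- r < s : use spec at s
      have hspec := gz_spec a b s.val
      rcases hspec with h4 | hall
      · exact absurd h4 (Nat.ne_of_lt (gz_lt hL hinj s))
      · have := hall r.val (by rwa [← Fin.lt_def]) s.2 r.2 hval
        simp only [Fin.eta] at this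
        obtain ⟨h1, h2⟩ := this
        rw [Set.inter_comm] at h1 h2
        exact ⟨h1, h2⟩
    · have hspec := gz_spec a b r.val
      rcases hspec with h4 | hall
      · exact absurd h4 (Nat.ne_of_lt (gz_lt hL hinj r))
      · have := hall s.val (by rwa [← Fin.lt_def]) r.2 s.2 hval.symm
        simpa [Fin.eta, Disj] using this
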